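/- arXiv:2504.14937 — 4 statements merged into one kernel-verified Lean document; each statement's English description precedes it below -/
import Mathlib

section
/- Let G be a DAG and U, V distinct vertices such that every directed path between U and V in G has length at most 1. Let H be the graph obtained from G by contracting U and V into a node X_UV, and let G' be the one-step canonical DAG for this contraction. Then: (i) the parents of X_UV in H equal the parents of U in G', and the parents of V in G' equal the parents of U in G' together with U; (ii) the children of X_UV in H equal the children of V in G', and the children of U in G' equal the children of V in G' together with V; (iii) the non-descendants of X_UV in H equal the non-descendants of U in G', and the non-descendants of V in G' equal the non-descendants of U in G' together with U. -/
namespace CausalDAGSummary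

variable {α : Type*}

/-- A directed graph (edge relation) is a DAG when it has no directed cycle. -/
def IsDAG (E : α → α → Prop) : Prop := ∀ a, ¬ Relation.TransGen E a a

/-- The edge relation of the graph `H` obtained by contracting the two distinct
vertices `u` and `v` into the single node `X_UV`: the merged node is represented by
`u`, the vertex `v` is removed, the merged node inherits all edges of `u` and of `v`
to/from the remaining vertices, any edge between `u` and `v` is removed, and edges
among the other vertices are kept. -/
def contractE (E : α → α → Prop) (u v : α) : α → α → Prop := fun a b =>
  a ≠ v ∧ b ≠ v ∧ a ≠ b ∧
    ((a = u ∧ (E u b ∨ E v b)) ∨ (b = u ∧ (E a u ∨ E a v)) ∨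
      (a ≠ u ∧ b ≠ u ∧ E a b))

/-- The edge relation of the one-step canonical DAG `G'` for the contraction of `u`
and `v` in `G`: the edges of `G` together with the edge `(u,v)`, edges `(P,u)` for
every parent `P` of `v`, edges `(P,v)` for every parent `P` of `u`, edges `(u,C)` for
every child `C` of `v`, and edges `(v,C)` for every child `C` of `u` (edges join
distinct vertices). -/
def canonE (E : α → α → Prop) (u v : α) : α → α → Prop := fun a b =>
  a ≠ b ∧
    (E a b ∨ (a = u ∧ b = v) ∨ (b = u ∧ E a v) ∨ (b = v ∧ E a u) ∨
      (a = u ∧ E v b) ∨ (a = v ∧ E u b))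

/-- The set `π(t)` of parents of `t`. -/
def parents (E : α → α → Prop) (t : α) : Set α := {w | E w t}

/-- The set `ch(t)` of children of `t`. -/
def children (E : α → α → Prop) (t : α) : Set α := {w | E t w}

/-- The set `Dsc(t)` of descendants of `t` (vertices reachable from `t` by a directed
path, including `t` itself). -/
def desc (E : α → α → Prop) (t : α) : Set α := {w | Relation.ReflTransGen E t w}

/-- The set `NDsc(t)` of non-descendants of `t`. -/
def ndesc (E : α → α → Prop) (t : α) : Set α := {w | ¬ Relation.ReflTransGen E t w}


/-!
STATEMENT 4: Let `G` be a DAG and `u, v` distinct vertices such that every directed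
path between `u` and `v` in `G` has length at most 1 (and the edge between them, if
any, is oriented `u → v`, as in the canonical DAG which adds the edge `(u,v)`).
Let `H` be the contraction of `u` and `v` into `X_UV` (represented here by `u`, with
`v` deleted; the vertex set of `H` consists of the vertices different from `v`), and
let `G'` be the one-step canonical DAG for this contraction.  Then:
(i)   `π_H(X_UV) = π_{G'}(u)` and `π_{G'}(v) = π_{G'}(u) ∪ {u}`;
(ii)  `ch_H(X_UV) = ch_{G'}(v)` and `ch_{G'}(u) = ch_{G'}(v) ∪ {v}`;
(iii) `NDsc_H(X_UV) = NDsc_{G'}(u)` and `NDsc_{G'}(v) = NDsc_{G'}(u) ∪ {u}`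
(the non-descendants in `H` being taken inside the vertex set of `H`).
-/

theorem contraction_parents_children_ndesc {α : Type*} [Fintype α]
    (E : α → α → Prop) (hG : IsDAG E) (u v : α) (huv : u ≠ v)
    (hpath : (¬ ∃ w, E u w ∧ Relation.TransGen E w v) ∧
      (¬ ∃ w, E v w ∧ Relation.TransGen E w u))
    (hvu : ¬ E v u) :
    (parents (contractE E u v) u = parents (canonE E u v) u ∧
        parents (canonE E u v) v = insert u (parents (canonE E u v) u)) ∧
      (children (contractE E u v) u = children (canonE E u v) v ∧
        children (canonE E u v) u = insert v (children (canonE E u v) v)) ∧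
      ({w | w ≠ v ∧ ¬ Relation.ReflTransGen (contractE E u v) u w}
            = ndesc (canonE E u v) u ∧
        ndesc (canonE E u v) v = insert u (ndesc (canonE E u v) u)) := by
  obtain ⟨h1, h2⟩ := hpath
  have hE : ∀ a, ¬ E a a := fun a h => hG a (Relation.TransGen.single h)
  -- contractE edges are canonE edges
  have hsub : ∀ a b, contractE E u v a b → canonE E u v a b := by
    rintro a b ⟨hav, hbv, hab, h⟩
    refine ⟨hab, ?_⟩
    rcases h with ⟨rfl, h | h⟩ | ⟨rfl, h | h⟩ | ⟨hau, hbu, h⟩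
    · exact Or.inl h
    · exact Or.inr (Or.inr (Or.inr (Or.inr (Or.inl ⟨rfl, h⟩))))
    · exact Or.inl h
    · exact Or.inr (Or.inr (Or.inl ⟨rfl, h⟩))
    · exact Or.inl h
  -- canonE edges away from v are contractE edges
  have hres : ∀ a b, a ≠ v → b ≠ v → canonE E u v a b → contractE E u v a b := by
    rintro a b hav hbv ⟨hab, h⟩
    refine ⟨hav, hbv, hab, ?_⟩
    rcases h with h | ⟨_, hf⟩ | ⟨rfl, h⟩ | ⟨hf, _⟩ | ⟨rfl, h⟩ | ⟨hf, _⟩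
    · by_cases hau : a = u
      · subst hau; exact Or.inl ⟨rfl, Or.inl h⟩
      · by_cases hbu : b = u
        · subst hbu; exact Or.inr (Or.inl ⟨rfl, Or.inl h⟩)
        · exact Or.inr (Or.inr ⟨hau, hbu, h⟩)
    · exact absurd hf hbv
    · exact Or.inr (Or.inl ⟨rfl, Or.inr h⟩)
    · exact absurd hf hbv
    · exact Or.inl ⟨rfl, Or.inr h⟩
    · exact absurd hf hav
  -- reach in H never lands on v
  have hHnv : ∀ b, Relation.ReflTransGen (contractE E u v) u b → b ≠ v := by
    intro b h
    rcases Relation.ReflTransGen.cases_tail h with rfl | ⟨c, _, e⟩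
    · exact huv
    · exact e.2.1
  -- canon reach from u maps into H reach (off v)
  have hC : ∀ w, Relation.ReflTransGen (canonE E u v) u w →
      w = v ∨ Relation.ReflTransGen (contractE E u v) u w := by
    intro w h
    induction h with
    | refl => exact Or.inr Relation.ReflTransGen.refl
    | @tail b c h e ih =>
      rcases ih with hbv | hb
      · -- edge from v
        rw [hbv] at e
        obtain ⟨hvc, hd⟩ := e
        have hec : E v c ∨ E u c := by
          rcases hd with h | ⟨h, _⟩ | ⟨_, h⟩ | ⟨h, _⟩ | ⟨h, _⟩ | ⟨_, h⟩
          · exact Or.inl h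
          · exact absurd h.symm huv
          · exact absurd h (hE v)
          · exact absurd h.symm hvc
          · exact absurd h.symm huv
          · exact Or.inr h
        by_cases hcv : c = v
        · exact Or.inl hcv
        · have hcu : u ≠ c := by
            intro hh
            rcases hec with h | h
            · exact hvu (hh.symm ▸ h)
            · exact hE u (hh.symm ▸ h)
          exact Or.inr (Relation.ReflTransGen.single
            ⟨huv, hcv, hcu, Or.inl ⟨rfl, hec.symm⟩⟩)
      · have hbv : b ≠ v := hHnv b hb
        by_cases hcv : c = v
        · exact Or.inl hcv
        · exact Or.inr (hb.tail (hres b c hbv hcv e))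
  -- invariant: canon descendants of v avoid u
  have hS : ∀ w, Relation.ReflTransGen (canonE E u v) v w →
      w = v ∨ (w ≠ u ∧ w ≠ v ∧ ¬ Relation.TransGen E w u ∧ ¬ Relation.TransGen E w v) := by
    intro w h
    induction h with
    | refl => exact Or.inl rfl
    | @tail b c h e ih =>
      rcases ih with hbv | ⟨hbu, hbv, hnu, hnv⟩
      · -- first step out of v
        rw [hbv] at e
        obtain ⟨hvc, hd⟩ := e
        have hec : E v c ∨ E u c := by
          rcases hd with h | ⟨h, _⟩ | ⟨_, h⟩ | ⟨h, _⟩ | ⟨h, _⟩ | ⟨_, h⟩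
          · exact Or.inl h
          · exact absurd h.symm huv
          · exact absurd h (hE v)
          · exact absurd h.symm hvc
          · exact absurd h.symm huv
          · exact Or.inr h
        refine Or.inr ⟨?_, fun h => hvc h.symm, ?_, ?_⟩
        · intro hh
          rcases hec with h | h
          · exact hvu (hh ▸ h)
          · exact hE u (hh ▸ h)
        · intro htg
          rcases hec with h | h
          · exact h2 ⟨c, h, htg⟩
          · exact hG u (Relation.TransGen.head h htg)
        · intro htg
          rcases hec with h | h
          · exact hG v (Relation.TransGen.head h htg)
          · exact h1 ⟨c, h, htg⟩
      · obtain ⟨hbc, hd⟩ := e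
        have hec : E b c := by
          rcases hd with h | ⟨h, _⟩ | ⟨_, h⟩ | ⟨_, h⟩ | ⟨h, _⟩ | ⟨h, _⟩
          · exact h
          · exact absurd h hbu
          · exact absurd (Relation.TransGen.single h) hnv
          · exact absurd (Relation.TransGen.single h) hnu
          · exact absurd h hbu
          · exact absurd h hbv
        refine Or.inr ⟨?_, ?_, ?_, ?_⟩
        · intro hh; exact hnu (hh ▸ Relation.TransGen.single hec)
        · intro hh; exact hnv (hh ▸ Relation.TransGen.single hec)
        · intro htg; exact hnu (Relation.TransGen.head hec htg)
        · intro htg; exact hnv (Relation.TransGen.head hec htg)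
  have hvnu : ¬ Relation.ReflTransGen (canonE E u v) v u := by
    intro h
    rcases hS u h with h' | ⟨h', _⟩
    · exact huv h'
    · exact h' rfl
  -- reaching w ≠ u from u in canon implies reaching it from v
  have hswap : ∀ w, w ≠ u → Relation.ReflTransGen (canonE E u v) u w →
      Relation.ReflTransGen (canonE E u v) v w := by
    intro w hwu h
    rcases Relation.ReflTransGen.cases_head h with heq | ⟨b, e, h'⟩
    · exact absurd heq.symm hwu
    · obtain ⟨hub, hd⟩ := e
      have hb3 : b = v ∨ E u b ∨ E v b := by
        rcases hd with h | ⟨_, h⟩ | ⟨h, _⟩ | ⟨h, _⟩ | ⟨_, h⟩ | ⟨h, _⟩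
        · exact Or.inr (Or.inl h)
        · exact Or.inl h
        · exact absurd h.symm hub
        · exact Or.inl h
        · exact Or.inr (Or.inr h)
        · exact absurd h huv
      rcases hb3 with hbv | hb
      · rw [hbv] at h'; exact h'
      · by_cases hbv : b = v
        · rw [hbv] at h'; exact h'
        · refine Relation.ReflTransGen.head ⟨fun h => hbv h.symm, ?_⟩ h'
          rcases hb with h | h
          · exact Or.inr (Or.inr (Or.inr (Or.inr (Or.inr ⟨rfl, h⟩))))
          · exact Or.inl h
  refine ⟨⟨?_, ?_⟩, ⟨?_, ?_⟩, ⟨?_, ?_⟩⟩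
  · -- parents H u = parents canon u
    ext w
    simp only [parents, Set.mem_setOf_eq]
    constructor
    · rintro ⟨hwv, _, hwu, h⟩
      refine ⟨hwu, ?_⟩
      rcases h with ⟨h, _⟩ | ⟨_, h | h⟩ | ⟨_, hf, _⟩
      · exact absurd h hwu
      · exact Or.inl h
      · exact Or.inr (Or.inr (Or.inl ⟨rfl, h⟩))
      · exact absurd rfl hf
    · rintro ⟨hwu, h⟩
      have hwuv : E w u ∨ E w v := by
        rcases h with h | ⟨h, _⟩ | ⟨_, h⟩ | ⟨h, _⟩ | ⟨h, _⟩ | ⟨_, h⟩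
        · exact Or.inl h
        · exact absurd h hwu
        · exact Or.inr h
        · exact absurd h huv
        · exact absurd h hwu
        · exact absurd h (hE u)
      have hwv : w ≠ v := by
        intro hh
        rcases hwuv with h | h
        · exact hvu (hh ▸ h)
        · exact hE v (hh ▸ h)
      exact ⟨hwv, huv, hwu, Or.inr (Or.inl ⟨rfl, hwuv⟩)⟩
  · -- parents canon v = insert u (parents canon u)
    ext w
    simp only [parents, Set.mem_setOf_eq, Set.mem_insert_iff]
    constructor
    · rintro ⟨hwv, h⟩
      have h3 : w = u ∨ E w v ∨ E w u := by
        rcases h with h | ⟨h, _⟩ | ⟨h, _⟩ | ⟨_, h⟩ | ⟨h, _⟩ | ⟨h, _⟩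
        · exact Or.inr (Or.inl h)
        · exact Or.inl h
        · exact absurd h.symm huv
        · exact Or.inr (Or.inr h)
        · exact Or.inl h
        · exact absurd h hwv
      rcases h3 with h | h | h
      · exact Or.inl h
      · by_cases hwu : w = u
        · exact Or.inl hwu
        · exact Or.inr ⟨hwu, Or.inr (Or.inr (Or.inl ⟨rfl, h⟩))⟩
      · exact Or.inr ⟨fun hh => hE u (hh ▸ h), Or.inl h⟩
    · rintro (hwu' | ⟨hwu, h⟩)
      · subst hwu'
        exact ⟨huv, Or.inr (Or.inl ⟨rfl, rfl⟩)⟩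
      · have hwuv : E w u ∨ E w v := by
          rcases h with h | ⟨h, _⟩ | ⟨_, h⟩ | ⟨h, _⟩ | ⟨h, _⟩ | ⟨_, h⟩
          · exact Or.inl h
          · exact absurd h hwu
          · exact Or.inr h
          · exact absurd h huv
          · exact absurd h hwu
          · exact absurd h (hE u)
        have hwv : w ≠ v := by
          intro hh
          rcases hwuv with h | h
          · exact hvu (hh ▸ h)
          · exact hE v (hh ▸ h)
        rcases hwuv with h | h
        · exact ⟨hwv, Or.inr (Or.inr (Or.inr (Or.inl ⟨rfl, h⟩)))⟩
        · exact ⟨hwv, Or.inl h⟩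
  · -- children H u = children canon v
    ext w
    simp only [children, Set.mem_setOf_eq]
    constructor
    · rintro ⟨_, hwv, huw, h⟩
      refine ⟨fun hh => hwv hh.symm, ?_⟩
      rcases h with ⟨_, h | h⟩ | ⟨h, _⟩ | ⟨hf, _, _⟩
      · exact Or.inr (Or.inr (Or.inr (Or.inr (Or.inr ⟨rfl, h⟩))))
      · exact Or.inl h
      · exact absurd h.symm huw
      · exact absurd rfl hf
    · rintro ⟨hvw, h⟩
      have hvuw : E v w ∨ E u w := by
        rcases h with h | ⟨h, _⟩ | ⟨_, h⟩ | ⟨h, _⟩ | ⟨h, _⟩ | ⟨_, h⟩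
        · exact Or.inl h
        · exact absurd h.symm huv
        · exact absurd h (hE v)
        · exact absurd h.symm hvw
        · exact absurd h.symm huv
        · exact Or.inr h
      have hwu : w ≠ u := by
        intro hh
        rcases hvuw with h | h
        · exact hvu (hh ▸ h)
        · exact hE u (hh ▸ h)
      exact ⟨huv, fun hh => hvw hh.symm, fun hh => hwu hh.symm,
        Or.inl ⟨rfl, hvuw.symm⟩⟩
  · -- children canon u = insert v (children canon v)
    ext w
    simp only [children, Set.mem_setOf_eq, Set.mem_insert_iff]
    constructor
    · rintro ⟨huw, h⟩
      have h3 : w = v ∨ E u w ∨ E v w := by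
        rcases h with h | ⟨_, h⟩ | ⟨h, _⟩ | ⟨h, _⟩ | ⟨_, h⟩ | ⟨h, _⟩
        · exact Or.inr (Or.inl h)
        · exact Or.inl h
        · exact absurd h.symm huw
        · exact Or.inl h
        · exact Or.inr (Or.inr h)
        · exact absurd h huv
      rcases h3 with h | h | h
      · exact Or.inl h
      · by_cases hwv : w = v
        · exact Or.inl hwv
        · exact Or.inr ⟨fun hh => hwv hh.symm,
            Or.inr (Or.inr (Or.inr (Or.inr (Or.inr ⟨rfl, h⟩))))⟩
      · exact Or.inr ⟨fun hh => hE w (hh ▸ h), Or.inl h⟩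
    · rintro (hwv' | ⟨hvw, h⟩)
      · subst hwv'
        exact ⟨huv, Or.inr (Or.inl ⟨rfl, rfl⟩)⟩
      · have hvuw : E v w ∨ E u w := by
          rcases h with h | ⟨h, _⟩ | ⟨_, h⟩ | ⟨h, _⟩ | ⟨h, _⟩ | ⟨_, h⟩
          · exact Or.inl h
          · exact absurd h.symm huv
          · exact absurd h (hE v)
          · exact absurd h.symm hvw
          · exact absurd h.symm huv
          · exact Or.inr h
        have hwu : u ≠ w := by
          intro hh
          rcases hvuw with h | h
          · exact hvu (hh.symm ▸ h)
          · exact hE u (hh.symm ▸ h)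
        rcases hvuw with h | h
        · exact ⟨hwu, Or.inr (Or.inr (Or.inr (Or.inr (Or.inl ⟨rfl, h⟩))))⟩
        · exact ⟨hwu, Or.inl h⟩
  · -- ndesc H u = ndesc canon u
    ext w
    simp only [ndesc, Set.mem_setOf_eq]
    constructor
    · rintro ⟨hwv, hn⟩ h
      rcases hC w h with hh | h'
      · exact hwv hh
      · exact hn h'
    · intro hn
      have hwv : w ≠ v := by
        rintro rfl
        exact hn (Relation.ReflTransGen.single ⟨huv, Or.inr (Or.inl ⟨rfl, rfl⟩)⟩)
      exact ⟨hwv, fun h => hn (Relation.ReflTransGen.mono hsub _ _ h)⟩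
  · -- ndesc canon v = insert u (ndesc canon u)
    ext w
    simp only [ndesc, Set.mem_setOf_eq, Set.mem_insert_iff]
    constructor
    · intro hn
      by_cases hwu : w = u
      · exact Or.inl hwu
      · exact Or.inr fun h => hn (hswap w hwu h)
    · rintro (rfl | hn)
      · exact hvnu
      · intro h
        exact hn (Relation.ReflTransGen.trans
          (Relation.ReflTransGen.single ⟨huv, Or.inr (Or.inl ⟨rfl, rfl⟩)⟩) h)

end CausalDAGSummary
end

section
/- Let G be a DAG and U, V distinct vertices such that every directed path between U and V in G has length at most 1; let H be the graph obtained from G by contracting U and V into a node X_UV, and let G' be the one-step canonical DAG for this contraction. Let T be a vertex of G with T not in {U,V} and T not a child of U or of V in G. Then: (i) the parents of T in G' equal the parents of T in H; (ii) the non-descendants of T in G' with U and V removed equal the non-descendants of T in H with X_UV removed; and (iii) both U and V are non-descendants of T in G' if and only if X_UV is a non-descendant of T in H. -/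
namespace CausalDAGSummary

variable {α : Type*}

/-!
STATEMENT 5: Let `G` be a DAG and `u, v` distinct vertices such that every directed
path between `u` and `v` in `G` has length at most 1 (the edge between them, if any,
oriented `u → v`, as in the canonical DAG which adds the edge `(u,v)`).  Let `H` be
the contraction of `u` and `v` into `X_UV` (represented here by `u`, with `v` deleted;
the vertex set of `H` consists of the vertices different from `v`), and let `G'` be
the one-step canonical DAG for this contraction.  Let `T` be a vertex with
`T ∉ {u, v}` and `T` not a child of `u` or of `v` in `G`.  Then:
(i)   `π_{G'}(T) = π_H(T)`;
(ii)  `NDsc_{G'}(T) \ {u, v} = NDsc_H(T) \ {X_UV}`;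
(iii) `{u, v} ⊆ NDsc_{G'}(T)` iff `X_UV ∈ NDsc_H(T)`.
-/

open Classical in
/-- The map collapsing `v` onto `u`. -/
noncomputable def merge (u v x : α) : α := if x = v then u else x

lemma merge_eq (u v x : α) (hx : x ≠ v) : merge u v x = x := by
  unfold merge; simp [hx]

lemma merge_v (u v : α) : merge u v v = u := by unfold merge; simp

lemma contract_to_canon (E : α → α → Prop) (u v a b : α)
    (h : contractE E u v a b) : canonE E u v a b := by
  obtain ⟨hav, hbv, hab, h⟩ := h
  unfold canonE
  rcases h with ⟨rfl, h | h⟩ | ⟨rfl, h | h⟩ | ⟨hau, hbu, h⟩ <;> tauto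

lemma canon_step (E : α → α → Prop) (u v : α) (huv : u ≠ v) (a b : α)
    (h : canonE E u v a b) :
    contractE E u v (merge u v a) (merge u v b) ∨ merge u v a = merge u v b := by
  obtain ⟨hab, h⟩ := h
  unfold contractE merge
  by_cases hav : a = v <;> by_cases hbv : b = v <;>
    by_cases hau : a = u <;> by_cases hbu : b = u <;>
    simp_all <;> tauto

theorem contraction_nonchild_vertex {α : Type*} [Fintype α]
    (E : α → α → Prop) (hG : IsDAG E) (u v : α) (huv : u ≠ v)
    (hpath : (¬ ∃ w, E u w ∧ Relation.TransGen E w v) ∧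
      (¬ ∃ w, E v w ∧ Relation.TransGen E w u))
    (hvu : ¬ E v u)
    (T : α) (hTu : T ≠ u) (hTv : T ≠ v) (hch : ¬ E u T ∧ ¬ E v T) :
    parents (canonE E u v) T = parents (contractE E u v) T ∧
      ndesc (canonE E u v) T \ {u, v}
        = {w | w ≠ v ∧ ¬ Relation.ReflTransGen (contractE E u v) T w} \ {u} ∧
      (({u, v} : Set α) ⊆ ndesc (canonE E u v) T ↔
        ¬ Relation.ReflTransGen (contractE E u v) T u) := by
  have key1 : ∀ w, Relation.ReflTransGen (contractE E u v) T w →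
      Relation.ReflTransGen (canonE E u v) T w :=
    fun w h => Relation.ReflTransGen.mono
      (fun a b hab => contract_to_canon E u v a b hab) T w h
  have key2 : ∀ w, Relation.ReflTransGen (canonE E u v) T w →
      Relation.ReflTransGen (contractE E u v) T (merge u v w) := by
    intro w h
    induction h with
    | refl => rw [merge_eq u v T hTv]
    | @tail b c hb hbc ih =>
      rcases canon_step E u v huv b c hbc with h' | h'
      · exact ih.tail h'
      · rwa [← h']
  refine ⟨?_, ?_, ?_⟩
  · ext a
    simp only [parents, canonE, contractE, Set.mem_setOf_eq]
    constructor
    · rintro ⟨hab, h | ⟨_, h⟩ | ⟨h, _⟩ | ⟨h, _⟩ | ⟨_, h⟩ | ⟨_, h⟩⟩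
      · have hau : a ≠ u := fun e => hch.1 (e ▸ h)
        have hav : a ≠ v := fun e => hch.2 (e ▸ h)
        exact ⟨hav, hTv, hab, Or.inr (Or.inr ⟨hau, hTu, h⟩)⟩
      · exact absurd h hTv
      · exact absurd h hTu
      · exact absurd h hTv
      · exact absurd h hch.2
      · exact absurd h hch.1
    · rintro ⟨hav, _, haT, ⟨_, h | h⟩ | ⟨h, _⟩ | ⟨_, _, h⟩⟩
      · exact absurd h hch.1
      · exact absurd h hch.2
      · exact absurd h hTu
      · exact ⟨haT, Or.inl h⟩
  · ext w
    simp only [Set.mem_diff, Set.mem_insert_iff, Set.mem_singleton_iff, ndesc,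
      Set.mem_setOf_eq]
    constructor
    · rintro ⟨hnd, hw⟩
      push_neg at hw
      exact ⟨⟨hw.2, fun hr => hnd (key1 w hr)⟩, hw.1⟩
    · rintro ⟨⟨hwv, hnd⟩, hwu⟩
      refine ⟨fun hr => hnd ?_, ?_⟩
      · have := key2 w hr
        rwa [merge_eq u v w hwv] at this
      · push_neg; exact ⟨hwu, hwv⟩
  · rw [Set.insert_subset_iff, Set.singleton_subset_iff]
    simp only [ndesc, Set.mem_setOf_eq]
    constructor
    · rintro ⟨hu, _⟩ hr
      exact hu (key1 u hr)
    · intro h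
      refine ⟨fun hr => h ?_, fun hr => h ?_⟩
      · have := key2 u hr; rwa [merge_eq u v u huv] at this
      · have := key2 v hr; rwa [merge_v] at this

end CausalDAGSummary
end

section
/- Let G be a DAG and U, V distinct vertices such that every directed path between U and V in G has length at most 1; let H be the graph obtained from G by contracting U and V into a node X_UV, and let G' be the one-step canonical DAG for this contraction. Let T be a vertex of G with T not in {U,V} and T not a parent of U or of V in G. Then: (i) the children of T in G' equal the children of T in H; (ii) the descendants of T in G' with U and V removed equal the descendants of T in H with X_UV removed; and (iii) both U and V are descendants of T in G' if and only if X_UV is a descendant of T in H. -/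
namespace CausalDAGSummary

variable {α : Type*}

/-!
STATEMENT 6: Let `G` be a DAG and `u, v` distinct vertices such that every directed
path between `u` and `v` in `G` has length at most 1 (the edge between them, if any,
oriented `u → v`, as in the canonical DAG which adds the edge `(u,v)`).  Let `H` be
the contraction of `u` and `v` into `X_UV` (represented here by `u`, with `v` deleted;
the vertex set of `H` consists of the vertices different from `v`), and let `G'` be
the one-step canonical DAG for this contraction.  Let `T` be a vertex with
`T ∉ {u, v}` and `T` not a parent of `u` or of `v` in `G`.  Then:
(i)   `ch_{G'}(T) = ch_H(T)`;
(ii)  `Dsc_{G'}(T) \ {u, v} = Dsc_H(T) \ {X_UV}`;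
(iii) `{u, v} ⊆ Dsc_{G'}(T)` iff `X_UV ∈ Dsc_H(T)`.
-/

private lemma irrefl_of_dag {E : α → α → Prop} (hG : IsDAG E) (a : α) : ¬ E a a :=
  fun h => hG a (Relation.TransGen.single h)

private lemma contract_le_canon {E : α → α → Prop} {u v : α} {a b : α}
    (h : contractE E u v a b) : canonE E u v a b := by
  obtain ⟨hav, hbv, hab, h⟩ := h
  refine ⟨hab, ?_⟩
  rcases h with ⟨ha, hE | hE⟩ | ⟨hb, hE | hE⟩ | ⟨ha, hb, hE⟩
  · subst ha; exact Or.inl hE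
  · subst ha; exact Or.inr (Or.inr (Or.inr (Or.inr (Or.inl ⟨rfl, hE⟩))))
  · subst hb; exact Or.inl hE
  · subst hb; exact Or.inr (Or.inr (Or.inl ⟨rfl, hE⟩))
  · exact Or.inl hE

open Classical in
private lemma canon_reach_to_contract {E : α → α → Prop} (hG : IsDAG E)
    {u v : α} (huv : u ≠ v) (hvu : ¬ E v u) {T w : α} (hTv : T ≠ v)
    (h : Relation.ReflTransGen (canonE E u v) T w) :
    Relation.ReflTransGen (contractE E u v) T (if w = v then u else w) := by
  induction h with
  | refl => rw [if_neg hTv]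
  | @tail b c hTb hbc ih =>
    obtain ⟨hbc', hd⟩ := hbc
    by_cases hbu : b = u
    · have hbv : b ≠ v := fun h => huv (hbu.symm.trans h)
      rw [if_neg hbv] at ih
      rw [hbu] at ih hd
      by_cases hcv : c = v
      · rw [if_pos hcv]; exact ih
      · rw [if_neg hcv]
        have hcu : c ≠ u := fun h => hbc' (hbu.trans h.symm)
        have hE : E u c ∨ E v c := by
          rcases hd with h | ⟨_, h⟩ | ⟨h, _⟩ | ⟨h, _⟩ | ⟨_, h⟩ | ⟨h, _⟩
          · exact Or.inl h
          · exact absurd h hcv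
          · exact absurd h hcu
          · exact absurd h hcv
          · exact Or.inr h
          · exact absurd h huv
        exact ih.tail ⟨huv, hcv, Ne.symm hcu, Or.inl ⟨rfl, hE⟩⟩
    · by_cases hbv : b = v
      · rw [if_pos hbv] at ih
        rw [hbv] at hd
        by_cases hcu : c = u
        · rw [hcu, if_neg huv]; exact ih
        · have hcv : c ≠ v := fun h => hbc' (hbv.trans h.symm)
          rw [if_neg hcv]
          have hE : E u c ∨ E v c := by
            rcases hd with h | ⟨h, _⟩ | ⟨h, _⟩ | ⟨h, _⟩ | ⟨h, _⟩ | ⟨_, h⟩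
            · exact Or.inr h
            · exact absurd h huv.symm
            · exact absurd h hcu
            · exact absurd h hcv
            · exact absurd h huv.symm
            · exact Or.inl h
          exact ih.tail ⟨huv, hcv, fun he => hcu he.symm, Or.inl ⟨rfl, hE⟩⟩
      · -- b ∉ {u, v}
        rw [if_neg hbv] at ih
        by_cases hcv : c = v
        · rw [if_pos hcv]
          rw [hcv] at hd
          have hE : E b u ∨ E b v := by
            rcases hd with h | ⟨h, _⟩ | ⟨h, _⟩ | ⟨_, h⟩ | ⟨h, _⟩ | ⟨h, _⟩
            · exact Or.inr h
            · exact absurd h hbu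
            · exact absurd h huv.symm
            · exact Or.inl h
            · exact absurd h hbu
            · exact absurd h hbv
          exact ih.tail ⟨hbv, huv, hbu, Or.inr (Or.inl ⟨rfl, hE⟩)⟩
        · rw [if_neg hcv]
          by_cases hcu : c = u
          · rw [hcu]
            rw [hcu] at hd
            have hE : E b u ∨ E b v := by
              rcases hd with h | ⟨h, _⟩ | ⟨_, h⟩ | ⟨h, _⟩ | ⟨h, _⟩ | ⟨h, _⟩
              · exact Or.inl h
              · exact absurd h hbu
              · exact Or.inr h
              · exact absurd h huv
              · exact absurd h hbu
              · exact absurd h hbv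
            exact ih.tail ⟨hbv, huv, hbu, Or.inr (Or.inl ⟨rfl, hE⟩)⟩
          · have hE : E b c := by
              rcases hd with h | ⟨h, _⟩ | ⟨h, _⟩ | ⟨h, _⟩ | ⟨h, _⟩ | ⟨h, _⟩
              · exact h
              · exact absurd h hbu
              · exact absurd h hcu
              · exact absurd h hcv
              · exact absurd h hbu
              · exact absurd h hbv
            exact ih.tail ⟨hbv, hcv, hbc', Or.inr (Or.inr ⟨hbu, hcu, hE⟩)⟩

private lemma canon_reach_u_to_v {E : α → α → Prop} (hG : IsDAG E)
    {u v : α} (huv : u ≠ v) (hvu : ¬ E v u) {T : α} (hTu : T ≠ u)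
    (h : Relation.ReflTransGen (canonE E u v) T u) :
    Relation.ReflTransGen (canonE E u v) T v := by
  rcases h.cases_tail with h | ⟨p, hTp, hpu⟩
  · exact absurd h.symm hTu
  · obtain ⟨hpu', hd⟩ := hpu
    have hE : E p u ∨ E p v := by
      rcases hd with h | ⟨_, h⟩ | ⟨_, h⟩ | ⟨h, _⟩ | ⟨h, _⟩ | ⟨h, h'⟩
      · exact Or.inl h
      · exact absurd h huv
      · exact Or.inr h
      · exact absurd h huv
      · exact absurd h hpu'
      · exact absurd h' (irrefl_of_dag hG u)
    have hpv : p ≠ v := by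
      intro hp
      rw [hp] at hE
      rcases hE with h | h
      · exact hvu h
      · exact irrefl_of_dag hG v h
    refine hTp.tail ⟨hpv, ?_⟩
    rcases hE with h | h
    · exact Or.inr (Or.inr (Or.inr (Or.inl ⟨rfl, h⟩)))
    · exact Or.inl h

theorem contraction_nonparent_vertex {α : Type*} [Fintype α]
    (E : α → α → Prop) (hG : IsDAG E) (u v : α) (huv : u ≠ v)
    (hpath : (¬ ∃ w, E u w ∧ Relation.TransGen E w v) ∧
      (¬ ∃ w, E v w ∧ Relation.TransGen E w u))
    (hvu : ¬ E v u)
    (T : α) (hTu : T ≠ u) (hTv : T ≠ v) (hpar : ¬ E T u ∧ ¬ E T v) :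
    children (canonE E u v) T = children (contractE E u v) T ∧
      desc (canonE E u v) T \ {u, v}
        = {w | w ≠ v ∧ Relation.ReflTransGen (contractE E u v) T w} \ {u} ∧
      (({u, v} : Set α) ⊆ desc (canonE E u v) T ↔
        Relation.ReflTransGen (contractE E u v) T u) := by
  refine ⟨?_, ?_, ?_⟩
  · -- (i) children
    ext b
    simp only [children, Set.mem_setOf_eq, canonE, contractE]
    constructor
    · rintro ⟨hTb, hd⟩
      have hE : E T b := by
        rcases hd with h | ⟨h, _⟩ | ⟨_, h⟩ | ⟨_, h⟩ | ⟨h, _⟩ | ⟨h, _⟩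
        · exact h
        · exact absurd h hTu
        · exact absurd h hpar.2
        · exact absurd h hpar.1
        · exact absurd h hTu
        · exact absurd h hTv
      have hbu : b ≠ u := fun h => hpar.1 (h ▸ hE)
      have hbv : b ≠ v := fun h => hpar.2 (h ▸ hE)
      exact ⟨hTv, hbv, hTb, Or.inr (Or.inr ⟨hTu, hbu, hE⟩)⟩
    · rintro ⟨_, hbv, hTb, hd⟩
      refine ⟨hTb, Or.inl ?_⟩
      rcases hd with ⟨h, _⟩ | ⟨_, h | h⟩ | ⟨_, _, h⟩
      · exact absurd h hTu
      · exact absurd h hpar.1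
      · exact absurd h hpar.2
      · exact h
  · -- (ii) descendants
    ext w
    simp only [desc, Set.mem_diff, Set.mem_setOf_eq, Set.mem_insert_iff,
      Set.mem_singleton_iff, not_or]
    constructor
    · rintro ⟨hr, hwu, hwv⟩
      have := canon_reach_to_contract hG huv hvu hTv hr
      rw [if_neg hwv] at this
      exact ⟨⟨hwv, this⟩, hwu⟩
    · rintro ⟨⟨hwv, hr⟩, hwu⟩
      exact ⟨Relation.ReflTransGen.mono (fun a b h => contract_le_canon h) T w hr, hwu, hwv⟩
  · -- (iii)
    constructor
    · intro h
      have hv : Relation.ReflTransGen (canonE E u v) T v := h (Or.inr rfl)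
      have := canon_reach_to_contract hG huv hvu hTv hv
      rwa [if_pos rfl] at this
    · intro h
      have hu : Relation.ReflTransGen (canonE E u v) T u :=
        Relation.ReflTransGen.mono (fun a b h => contract_le_canon h) T u h
      have hv := canon_reach_u_to_v hG huv hvu hTu hu
      rintro x (rfl | rfl)
      · exact hu
      · exact hv


end CausalDAGSummary
end

section
/- Let (H,f) be a summary DAG of a DAG G with a fixed complete topological order of V(G), and let G_H be the associated canonical causal DAG. Then for any pairwise disjoint subsets X, Y, Z of V(H): X and Y are d-separated by Z in H if and only if f^{-1}(X) and f^{-1}(Y) are d-separated by f^{-1}(Z) in G_H. -/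
namespace CausalDAGSummary

variable {α : Type*}

/-- A trail in a directed graph: a sequence of vertices such that consecutive
vertices are joined by an edge (in one direction or the other), with distinct edges
used along the trail. -/
def IsTrail (E : α → α → Prop) (xs : List α) : Prop :=
  xs.Chain' (fun a b => E a b ∨ E b a) ∧
    ((xs.zip xs.tail).map (fun p => Sym2.mk p)).Nodup

/-- The vertex at position `i` of the trail `xs` is head-to-head: both its
neighbouring edges along the trail point into it. -/
def HeadToHead (E : α → α → Prop) (xs : List α) (i : ℕ) : Prop :=
  ∃ (_ : 0 < i) (h2 : i + 1 < xs.length),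
    E (xs.get ⟨i - 1, by omega⟩) (xs.get ⟨i, by omega⟩) ∧
      E (xs.get ⟨i + 1, h2⟩) (xs.get ⟨i, by omega⟩)

/-- A trail is active given `Z` if every head-to-head vertex of the trail belongs to
`Z` or has a descendant in `Z`, and every non-head-to-head vertex of the trail does
not belong to `Z`. -/
def ActiveTrail (E : α → α → Prop) (Z : Set α) (xs : List α) : Prop :=
  IsTrail E xs ∧
    ∀ (i : ℕ) (hi : i < xs.length),
      (HeadToHead E xs i →
        ∃ d ∈ Z, Relation.ReflTransGen E (xs.get ⟨i, hi⟩) d) ∧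
      (¬ HeadToHead E xs i → xs.get ⟨i, hi⟩ ∉ Z)

/-- `X` and `Y` are d-connected given `Z`: some active trail joins a vertex of `X`
to a vertex of `Y`. -/
def DConnected (E : α → α → Prop) (X Y Z : Set α) : Prop :=
  ∃ (xs : List α) (hne : xs ≠ []),
    xs.head hne ∈ X ∧ xs.getLast hne ∈ Y ∧ ActiveTrail E Z xs

/-- `X` and `Y` are d-separated by `Z`: every trail between a vertex of `X` and a
vertex of `Y` is blocked given `Z`. -/
def DSeparated (E : α → α → Prop) (X Y Z : Set α) : Prop :=
  ¬ DConnected E X Y Z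


/-- The edge relation of the canonical causal DAG `G_H` associated with the summary
DAG `(H, f)` of `G` and the complete topological order on `Fin n` (modelling the
fixed complete topological order of `V(G)`). -/
def canonicalE {n : ℕ} {β : Type*} (E : Fin n → Fin n → Prop)
    (EH : β → β → Prop) (f : Fin n → β) : Fin n → Fin n → Prop := fun i j =>
  E i j ∨ EH (f i) (f j) ∨ (f i = f j ∧ i < j)

/-! ### Function-based walks -/

def HtHF (E : α → α → Prop) (g : ℕ → α) (m i : ℕ) : Prop :=
  0 < i ∧ i < m ∧ E (g (i-1)) (g i) ∧ E (g (i+1)) (g i)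

def ActiveF (E : α → α → Prop) (Z : Set α) (g : ℕ → α) (m : ℕ) : Prop :=
  (∀ i < m, E (g i) (g (i+1)) ∨ E (g (i+1)) (g i)) ∧
  ∀ i ≤ m, (HtHF E g m i → ∃ d ∈ Z, Relation.ReflTransGen E (g i) d) ∧
           (¬ HtHF E g m i → g i ∉ Z)

def ConnF (E : α → α → Prop) (X Y Z : Set α) : Prop :=
  ∃ (m : ℕ) (g : ℕ → α), ActiveF E Z g m ∧ g 0 ∈ X ∧ g m ∈ Y

lemma isDAG_irrefl {E : α → α → Prop} (hE : IsDAG E) {a : α} (h : E a a) : False :=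
  hE a (Relation.TransGen.single h)

lemma isDAG_asymm {E : α → α → Prop} (hE : IsDAG E) {a b : α} (h1 : E a b) (h2 : E b a) :
    False :=
  hE a ((Relation.TransGen.single h1).tail h2)

lemma chainLemma {E : α → α → Prop} {Z : Set α} {g : ℕ → α} {m : ℕ}
    (hA : ActiveF E Z g m) :
    ∀ s, 0 < s → s ≤ m → E (g (s-1)) (g s) →
      (∃ d ∈ Z, Relation.ReflTransGen E (g s) d) ∨
      (∀ t, s ≤ t → t < m → E (g t) (g (t+1))) := by
  classical
  have key : ∀ k s, m - s = k → 0 < s → s ≤ m → E (g (s-1)) (g s) →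
      (∃ d ∈ Z, Relation.ReflTransGen E (g s) d) ∨
      (∀ t, s ≤ t → t < m → E (g t) (g (t+1))) := by
    intro k
    induction k with
    | zero =>
      intro s hk h0 hsm _
      exact Or.inr (fun t hst htm => absurd htm (by omega))
    | succ k IH =>
      intro s hk h0 hsm hin
      have hsm' : s < m := by omega
      by_cases hb : E (g (s+1)) (g s)
      · exact Or.inl ((hA.2 s (by omega)).1 ⟨h0, hsm', hin, hb⟩)
      · have hf : E (g s) (g (s+1)) := (hA.1 s hsm').resolve_right hb
        have hin' : E (g ((s+1)-1)) (g (s+1)) := by simpa using hf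
        rcases IH (s+1) (by omega) (by omega) (by omega) hin' with h | h
        · obtain ⟨d, hd, hr⟩ := h
          exact Or.inl ⟨d, hd, Relation.ReflTransGen.head hf hr⟩
        · refine Or.inr (fun t hst htm => ?_)
          rcases eq_or_lt_of_le hst with rfl | h'
          · exact hf
          · exact h t (by omega) htm
  intro s; exact key (m - s) s rfl

lemma connF_dconnected {E : α → α → Prop} {Z : Set α} (hE : IsDAG E) :
    ∀ m, ∀ g : ℕ → α, ActiveF E Z g m → ∀ {X Y : Set α}, g 0 ∈ X → g m ∈ Y →
      DConnected E X Y Z := by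
  classical
  intro m
  induction m using Nat.strong_induction_on with
  | _ m IH =>
  intro g hA X Y hX hY
  by_cases hinj : ∀ p ≤ m, ∀ q ≤ m, g p = g q → p = q
  · -- build the trail
    set xs : List α := List.ofFn (fun k : Fin (m+1) => g k) with hxs
    have hlen : xs.length = m + 1 := List.length_ofFn
    have hget : ∀ (i : ℕ) (hi : i < xs.length), xs.get ⟨i, hi⟩ = g i := by
      intro i hi
      simp only [hxs, List.get_eq_getElem, List.getElem_ofFn]
    have hnil : xs ≠ [] := List.length_pos_iff.mp (by omega)
    have hHtH : ∀ (i : ℕ), (HeadToHead E xs i ↔ HtHF E g m i) := by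
      intro i
      constructor
      · rintro ⟨h0, h2, ha, hb⟩
        simp only [hget] at ha hb
        exact ⟨h0, by omega, ha, hb⟩
      · rintro ⟨h0, him, ha, hb⟩
        refine ⟨h0, by omega, ?_, ?_⟩
        · simp only [hget]; exact ha
        · simp only [hget]; exact hb
    have hzlen : (xs.zip xs.tail).length = m := by
      simp only [List.length_zip, List.length_tail, hlen]; omega
    have hzget : ∀ (k : ℕ) (hk : k < (xs.zip xs.tail).length),
        (xs.zip xs.tail).get ⟨k, hk⟩ = (g k, g (k+1)) := by
      intro k hk
      have hk1 : k < xs.length := by omega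
      have hk2 : k < xs.tail.length := by simp [List.length_tail]; omega
      have : (xs.zip xs.tail).get ⟨k, hk⟩ = (xs.get ⟨k, hk1⟩, xs.tail.get ⟨k, hk2⟩) := by
        simp [List.get_eq_getElem, List.getElem_zip]
      rw [this, hget]
      have hk3 : k + 1 < xs.length := by omega
      have : xs.tail.get ⟨k, hk2⟩ = xs.get ⟨k+1, hk3⟩ := by
        simp [List.get_eq_getElem, List.getElem_tail]
      rw [this, hget]
    refine ⟨xs, hnil, ?_, ?_, ⟨⟨?_, ?_⟩, ?_⟩⟩
    · have : xs.head hnil = xs.get ⟨0, by omega⟩ := by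
        simp [List.get_eq_getElem, List.head_eq_getElem]
      rw [this, hget]; exact hX
    · have : xs.getLast hnil = xs.get ⟨xs.length - 1, by omega⟩ := by
        simp [List.get_eq_getElem, List.getLast_eq_getElem]
      rw [this]
      have : xs.get ⟨xs.length - 1, by omega⟩ = g m := by
        have h1 : xs.length - 1 = m := by omega
        rw [hget]
        congr 1
      rw [this]; exact hY
    · apply List.isChain_iff_getElem.mpr
      intro i hi
      simp only [hxs, List.getElem_ofFn]
      exact hA.1 i (by omega)
    · rw [List.nodup_iff_injective_get]
      rintro ⟨i, hi⟩ ⟨j, hj⟩ hij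
      simp only [List.length_map] at hi hj
      simp only [List.get_eq_getElem, List.getElem_map] at hij
      rw [show ∀ k hk, (xs.zip xs.tail)[k]'hk = (g k, g (k+1)) from hzget, show ∀ k hk, (xs.zip xs.tail)[k]'hk = (g k, g (k+1)) from hzget] at hij
      have hpair : (g i, g (i+1)) = (g j, g (j+1)) := by
        have := congrFun hij (g j, g (j+1))
        rcases Sym2.eq_iff.mp this with ⟨h, _⟩ | ⟨h, _⟩ <;> exact h
      rcases (Or.inl (Prod.mk.inj hpair) : (g i = g j ∧ g (i+1) = g (j+1)) ∨
          (g i = g (j+1) ∧ g (i+1) = g j)) with ⟨h1, h2⟩ | ⟨h1, h2⟩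
      · have := hinj i (by omega) j (by omega) h1
        exact Fin.ext (by simpa using this)
      · have e1 := hinj i (by omega) (j+1) (by omega) h1
        have e2 := hinj (i+1) (by omega) j (by omega) h2
        omega
    · intro i hi
      rw [hget]
      constructor
      · intro h
        exact (hA.2 i (by omega)).1 ((hHtH i).mp h)
      · intro h
        exact (hA.2 i (by omega)).2 (fun hh => h ((hHtH i).mpr hh))
  · push_neg at hinj
    obtain ⟨p0, hp0, q0, hq0, hg0, hne0⟩ := hinj
    obtain ⟨p, q, hpq, hqm, hgpq⟩ : ∃ p q, p < q ∧ q ≤ m ∧ g p = g q := by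
      rcases hne0.lt_or_gt with h | h
      · exact ⟨p0, q0, h, hq0, hg0⟩
      · exact ⟨q0, p0, h, hp0, hg0.symm⟩
    set Δ := q - p with hΔ
    set m₂ := m - Δ with hm₂
    have hΔpos : 0 < Δ := by omega
    have hm₂Δ : m₂ + Δ = m := by omega
    have hpm₂ : p ≤ m₂ := by omega
    set g₂ : ℕ → α := fun i => if i ≤ p then g i else g (i + Δ) with hg₂
    have hlo : ∀ i, i ≤ p → g₂ i = g i := by
      intro i h; simp [hg₂, h]
    have hhi : ∀ i, p ≤ i → g₂ i = g (i + Δ) := by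
      intro i h
      rcases eq_or_lt_of_le h with rfl | h'
      · have : p + Δ = q := by omega
        simp [hg₂, this, hgpq]
      · simp only [hg₂]
        rw [if_neg (by omega)]
    have hchain₂ : ∀ i < m₂, E (g₂ i) (g₂ (i+1)) ∨ E (g₂ (i+1)) (g₂ i) := by
      intro i hi
      rcases lt_or_ge i p with h | h
      · rw [hlo i (by omega), hlo (i+1) (by omega)]
        exact hA.1 i (by omega)
      · rw [hhi i h, hhi (i+1) (by omega)]
        have : i + 1 + Δ = (i + Δ) + 1 := by omega
        rw [this]
        exact hA.1 (i + Δ) (by omega)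
    have hHlo : ∀ i, i < p → (HtHF E g₂ m₂ i ↔ HtHF E g m i) := by
      intro i hip
      unfold HtHF
      rw [hlo i (by omega), hlo (i+1) (by omega), hlo (i-1) (by omega)]
      constructor
      · rintro ⟨a, b, c, d⟩; exact ⟨a, by omega, c, d⟩
      · rintro ⟨a, b, c, d⟩; exact ⟨a, by omega, c, d⟩
    have hHhi : ∀ i, p < i → (HtHF E g₂ m₂ i ↔ HtHF E g m (i + Δ)) := by
      intro i hip
      unfold HtHF
      rw [hhi i (by omega), hhi (i+1) (by omega), hhi (i-1) (by omega)]
      have e1 : i - 1 + Δ = (i + Δ) - 1 := by omega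
      have e2 : i + 1 + Δ = (i + Δ) + 1 := by omega
      rw [e1, e2]
      constructor
      · rintro ⟨a, b, c, d⟩; exact ⟨by omega, by omega, c, d⟩
      · rintro ⟨a, b, c, d⟩; exact ⟨by omega, by omega, c, d⟩
    have hA₂ : ActiveF E Z g₂ m₂ := by
      refine ⟨hchain₂, ?_⟩
      intro i him₂
      rcases lt_trichotomy p i with h | heq | h
      · rw [hhi i (by omega)]
        constructor
        · intro hh
          exact (hA.2 (i + Δ) (by omega)).1 ((hHhi i h).mp hh)
        · intro hh
          exact (hA.2 (i + Δ) (by omega)).2 (fun hx => hh ((hHhi i h).mpr hx))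
      · -- junction
        subst heq
        rw [hlo p le_rfl]
        constructor
        · rintro ⟨h0, hpm₂', hL, hR⟩
          rw [hlo (p-1) (by omega), hlo p le_rfl] at hL
          rw [hhi (p+1) (by omega), hlo p le_rfl] at hR
          have hq1 : p + 1 + Δ = q + 1 := by omega
          rw [hq1] at hR
          by_cases hHo : HtHF E g m p
          · exact (hA.2 p (by omega)).1 hHo
          · have hpm : p < m := by omega
            have hnr : ¬ E (g (p+1)) (g p) := fun hx => hHo ⟨h0, hpm, hL, hx⟩
            have hfwd : E (g p) (g (p+1)) := (hA.1 p hpm).resolve_right hnr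
            by_cases hq : p + 1 = q
            · rw [hq, ← hgpq] at hfwd
              exact absurd hfwd (fun hx => isDAG_irrefl hE hx)
            · have hin : E (g ((p+1)-1)) (g (p+1)) := by simpa using hfwd
              rcases chainLemma hA (p+1) (by omega) (by omega) hin with hc | hc
              · obtain ⟨d, hd, hr⟩ := hc
                exact ⟨d, hd, Relation.ReflTransGen.head hfwd hr⟩
              · have hqm' : q < m := by omega
                have hfq : E (g q) (g (q+1)) := hc q (by omega) hqm'
                have hR' : E (g (q+1)) (g q) := by rw [← hgpq]; exact hR
                exact (isDAG_asymm hE hfq hR').elim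
        · intro hnH
          by_cases hp0 : p = 0
          · subst hp0
            exact (hA.2 0 (by omega)).2 (fun ⟨c, _⟩ => absurd c (by omega))
          by_cases hpm₂' : p = m₂
          · have hqm'' : q = m := by omega
            rw [hgpq, hqm'']
            exact (hA.2 m le_rfl).2 (fun ⟨_, c, _⟩ => absurd c (by omega))
          · by_cases hL : E (g (p-1)) (g p)
            · have hnR : ¬ E (g (q+1)) (g p) := by
                intro hR
                refine hnH ⟨by omega, by omega, ?_, ?_⟩
                · rw [hlo (p-1) (by omega), hlo p le_rfl]; exact hL
                · rw [hhi (p+1) (by omega), hlo p le_rfl]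
                  have : p + 1 + Δ = q + 1 := by omega
                  rw [this]; exact hR
              rw [hgpq]
              refine (hA.2 q (by omega)).2 ?_
              rintro ⟨_, _, _, h4⟩
              exact hnR (by rw [hgpq]; exact h4)
            · refine (hA.2 p (by omega)).2 ?_
              rintro ⟨_, _, h3, _⟩
              exact hL h3
      · rw [hlo i (by omega)]
        constructor
        · intro hh
          exact (hA.2 i (by omega)).1 ((hHlo i h).mp hh)
        · intro hh
          exact (hA.2 i (by omega)).2 (fun hx => hh ((hHlo i h).mpr hx))
    have hX₂ : g₂ 0 ∈ X := by rw [hlo 0 (by omega)]; exact hX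
    have hY₂ : g₂ m₂ ∈ Y := by
      rw [hhi m₂ hpm₂, hm₂Δ]; exact hY
    exact IH m₂ (by omega) g₂ hA₂ hX₂ hY₂

lemma dconnected_connF {E : α → α → Prop} {Z : Set α} {X Y : Set α}
    (h : DConnected E X Y Z) : ConnF E X Y Z := by
  obtain ⟨xs, hne, hX, hY, ⟨⟨hchain, _⟩, hact⟩⟩ := h
  have hpos : 0 < xs.length := List.length_pos_iff.mpr hne
  set m := xs.length - 1 with hm
  set g : ℕ → α := fun i => xs.get ⟨min i m, by omega⟩ with hg
  have hget : ∀ (i : ℕ) (hi : i < xs.length), g i = xs.get ⟨i, hi⟩ := by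
    intro i hi
    have hmin : min i m = i := by omega
    simp only [hg]
    congr 1
    exact Fin.ext (by simpa using hmin)
  have hHtH : ∀ i, i ≤ m → (HtHF E g m i ↔ HeadToHead E xs i) := by
    intro i him
    constructor
    · rintro ⟨h0, h1, ha, hb⟩
      refine ⟨h0, by omega, ?_, ?_⟩
      · rw [← hget (i-1) (by omega), ← hget i (by omega)]; exact ha
      · rw [← hget (i+1) (by omega), ← hget i (by omega)]; exact hb
    · rintro ⟨h0, h1, ha, hb⟩
      refine ⟨h0, by omega, ?_, ?_⟩
      · rw [hget (i-1) (by omega), hget i (by omega)]; exact ha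
      · rw [hget (i+1) (by omega), hget i (by omega)]; exact hb
  refine ⟨m, g, ⟨?_, ?_⟩, ?_, ?_⟩
  · intro i hi
    rw [hget i (by omega), hget (i+1) (by omega)]
    exact List.isChain_iff_getElem.mp hchain i (by omega)
  · intro i him
    constructor
    · intro hh
      have := (hact i (by omega)).1 ((hHtH i him).mp hh)
      rwa [← hget i (by omega)] at this
    · intro hh
      have := (hact i (by omega)).2 (fun hx => hh ((hHtH i him).mpr hx))
      rwa [← hget i (by omega)] at this
  · rw [hget 0 (by omega)]
    have : xs.head hne = xs.get ⟨0, by omega⟩ := by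
      simp [List.get_eq_getElem, List.head_eq_getElem]
    rwa [← this]
  · rw [hget m (by omega)]
    have : xs.getLast hne = xs.get ⟨m, by omega⟩ := by
      simp [List.get_eq_getElem, List.getLast_eq_getElem, hm]
    rwa [← this]

section Canonical

variable {n : ℕ} {β : Type*} {E : Fin n → Fin n → Prop} {EH : β → β → Prop}
  {f : Fin n → β}

lemma canonicalE_push (htopo : ∀ i j, E i j → i < j) (hH : IsDAG EH)
    (hsummary : ∀ i j, E i j → f i = f j ∨ EH (f i) (f j))
    {x y : Fin n} (h : canonicalE E EH f x y) : f x = f y ∨ EH (f x) (f y) := by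
  rcases h with h | h | ⟨h, _⟩
  · exact hsummary _ _ h
  · exact Or.inr h
  · exact Or.inl h

lemma canonicalE_dir (htopo : ∀ i j, E i j → i < j) (hH : IsDAG EH)
    (hsummary : ∀ i j, E i j → f i = f j ∨ EH (f i) (f j))
    {x y : Fin n} (h : canonicalE E EH f x y) (hne : f x ≠ f y) : EH (f x) (f y) :=
  (canonicalE_push htopo hH hsummary h).resolve_left hne

lemma canonicalE_lt (htopo : ∀ i j, E i j → i < j) (hH : IsDAG EH)
    {x y : Fin n} (h : canonicalE E EH f x y) (heq : f x = f y) : x < y := by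
  rcases h with h | h | ⟨_, h⟩
  · exact htopo _ _ h
  · rw [heq] at h
    exact (isDAG_irrefl hH h).elim
  · exact h

lemma canonicalE_asymm (htopo : ∀ i j, E i j → i < j) (hH : IsDAG EH)
    (hsummary : ∀ i j, E i j → f i = f j ∨ EH (f i) (f j))
    {x y : Fin n} (h1 : canonicalE E EH f x y) (h2 : canonicalE E EH f y x) : False := by
  by_cases heq : f x = f y
  · exact absurd (canonicalE_lt htopo hH h2 heq.symm) (by
      have := canonicalE_lt htopo hH h1 heq; omega)
  · exact isDAG_asymm hH (canonicalE_dir htopo hH hsummary h1 heq)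
      (canonicalE_dir htopo hH hsummary h2 (Ne.symm heq))

lemma canonicalE_rtg_push (htopo : ∀ i j, E i j → i < j) (hH : IsDAG EH)
    (hsummary : ∀ i j, E i j → f i = f j ∨ EH (f i) (f j))
    {x y : Fin n} (h : Relation.ReflTransGen (canonicalE E EH f) x y) :
    Relation.ReflTransGen EH (f x) (f y) := by
  induction h with
  | refl => exact Relation.ReflTransGen.refl
  | tail _ hstep ih =>
    rcases canonicalE_push htopo hH hsummary hstep with heq | hEH
    · rwa [← heq]
    · exact ih.tail hEH

lemma canonicalE_isDAG (htopo : ∀ i j, E i j → i < j) (hH : IsDAG EH)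
    (hsummary : ∀ i j, E i j → f i = f j ∨ EH (f i) (f j)) :
    IsDAG (canonicalE E EH f) := by
  intro x hx
  have key : ∀ {a b : Fin n}, Relation.TransGen (canonicalE E EH f) a b →
      (f a = f b ∧ a < b) ∨ Relation.TransGen EH (f a) (f b) := by
    intro a b h
    induction h with
    | @single c hstep =>
      by_cases heq : f a = f c
      · exact Or.inl ⟨heq, canonicalE_lt htopo hH hstep heq⟩
      · exact Or.inr (Relation.TransGen.single (canonicalE_dir htopo hH hsummary hstep heq))
    | @tail b c _ hstep ih =>
      rcases canonicalE_push htopo hH hsummary hstep with heq | hEH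
      · rcases ih with ⟨h1, h2⟩ | h1
        · exact Or.inl ⟨h1.trans heq, lt_of_lt_of_le h2 (le_of_lt
            (canonicalE_lt htopo hH hstep heq))⟩
        · exact Or.inr (heq ▸ h1)
      · rcases ih with ⟨h1, _⟩ | h1
        · exact Or.inr (Relation.TransGen.single (h1 ▸ hEH))
        · exact Or.inr (h1.tail hEH)
  rcases key hx with ⟨_, h⟩ | h
  · omega
  · exact hH _ h

lemma lift_connF (htopo : ∀ i j, E i j → i < j) (hH : IsDAG EH)
    (hsummary : ∀ i j, E i j → f i = f j ∨ EH (f i) (f j))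
    (hf : Function.Surjective f)
    {X Y Z : Set β} (h : ConnF EH X Y Z) :
    ConnF (canonicalE E EH f) (f ⁻¹' X) (f ⁻¹' Y) (f ⁻¹' Z) := by
  classical
  obtain ⟨m, gH, hA, hX, hY⟩ := h
  set g : ℕ → Fin n := fun i => Function.surjInv hf (gH i) with hg
  have hfg : ∀ i, f (g i) = gH i := fun i => Function.surjInv_eq hf _
  have hlift : ∀ {a b : β}, EH a b → canonicalE E EH f (Function.surjInv hf a)
      (Function.surjInv hf b) := by
    intro a b hab
    exact Or.inr (Or.inl (by rw [Function.surjInv_eq hf, Function.surjInv_eq hf]; exact hab))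
  have hchain : ∀ i < m, canonicalE E EH f (g i) (g (i+1)) ∨
      canonicalE E EH f (g (i+1)) (g i) := by
    intro i hi
    rcases hA.1 i hi with h | h
    · exact Or.inl (hlift h)
    · exact Or.inr (hlift h)
  have hliftRTG : ∀ {a b : β}, Relation.ReflTransGen EH a b →
      Relation.ReflTransGen (canonicalE E EH f) (Function.surjInv hf a)
        (Function.surjInv hf b) := by
    intro a b h
    induction h with
    | refl => exact Relation.ReflTransGen.refl
    | tail _ hs ih => exact ih.tail (hlift hs)
  have hHtH : ∀ i, i ≤ m → (HtHF (canonicalE E EH f) g m i ↔ HtHF EH gH m i) := by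
    intro i him
    constructor
    · rintro ⟨h0, h1, ha, hb⟩
      refine ⟨h0, h1, ?_, ?_⟩
      · rcases canonicalE_push htopo hH hsummary ha with heq | hEH
        · rw [hfg, hfg] at heq
          rcases hA.1 (i-1) (by omega) with hc | hc
          · rw [show i - 1 + 1 = i by omega] at hc
            rw [heq] at hc
            exact (isDAG_irrefl hH hc).elim
          · rw [show i - 1 + 1 = i by omega] at hc
            rw [heq] at hc
            exact (isDAG_irrefl hH hc).elim
        · rwa [hfg, hfg] at hEH
      · rcases canonicalE_push htopo hH hsummary hb with heq | hEH
        · rw [hfg, hfg] at heq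
          rcases hA.1 i (by omega) with hc | hc
          · rw [heq] at hc
            exact (isDAG_irrefl hH hc).elim
          · rw [heq] at hc
            exact (isDAG_irrefl hH hc).elim
        · rwa [hfg, hfg] at hEH
    · rintro ⟨h0, h1, ha, hb⟩
      exact ⟨h0, h1, hlift ha, hlift hb⟩
  refine ⟨m, g, ⟨hchain, ?_⟩, ?_, ?_⟩
  · intro i him
    constructor
    · intro hh
      obtain ⟨d, hd, hr⟩ := (hA.2 i him).1 ((hHtH i him).mp hh)
      exact ⟨Function.surjInv hf d, by
        simp [Set.mem_preimage, Function.surjInv_eq hf]; exact hd, hliftRTG hr⟩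
    · intro hh
      have := (hA.2 i him).2 (fun hx => hh ((hHtH i him).mpr hx))
      simp [Set.mem_preimage, hg, Function.surjInv_eq hf]
      exact this
  · simp [Set.mem_preimage, hg, Function.surjInv_eq hf]; exact hX
  · simp [Set.mem_preimage, hg, Function.surjInv_eq hf]; exact hY

lemma contract_connF (htopo : ∀ i j, E i j → i < j) (hH : IsDAG EH)
    (hsummary : ∀ i j, E i j → f i = f j ∨ EH (f i) (f j))
    {X Y Z : Set β}
    (h : ConnF (canonicalE E EH f) (f ⁻¹' X) (f ⁻¹' Y) (f ⁻¹' Z)) :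
    ConnF EH X Y Z := by
  classical
  obtain ⟨m, g, hA, hX, hY⟩ := h
  set E' := canonicalE E EH f with hE'def
  set b : ℕ → β := fun i => f (g (min i m)) with hbdef
  have hbm : ∀ i, m ≤ i → b i = b m := fun i h => by
    simp [hbdef, min_eq_right h, min_self]
  have hble : ∀ i, i ≤ m → b i = f (g i) := fun i h => by
    simp [hbdef, min_eq_left h]
  have hedge : ∀ i, i < m → f (g i) ≠ f (g (i+1)) →
      (EH (f (g i)) (f (g (i+1))) ∧ E' (g i) (g (i+1))) ∨
      (EH (f (g (i+1))) (f (g i)) ∧ E' (g (i+1)) (g i)) := by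
    intro i him hne
    rcases hA.1 i him with hc | hc
    · exact Or.inl ⟨canonicalE_dir htopo hH hsummary hc hne, hc⟩
    · exact Or.inr ⟨canonicalE_dir htopo hH hsummary hc (Ne.symm hne), hc⟩
  set nxt : ℕ → ℕ := fun j => if hj : ∃ i, j < i ∧ b i ≠ b j then Nat.find hj else m + 1
    with hnxtdef
  have hnxt_gt : ∀ j, j ≤ m → j < nxt j := by
    intro j hj
    by_cases hex : ∃ i, j < i ∧ b i ≠ b j
    · simp only [hnxtdef, dif_pos hex]; exact (Nat.find_spec hex).1
    · simp only [hnxtdef, dif_neg hex]; omega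
  have hnxt_run : ∀ j i, j ≤ i → i < nxt j → b i = b j := by
    intro j i hji hilt
    rcases eq_or_lt_of_le hji with rfl | hji'
    · rfl
    by_cases hex : ∃ i, j < i ∧ b i ≠ b j
    · simp only [hnxtdef, dif_pos hex] at hilt
      have := Nat.find_min hex hilt
      push_neg at this
      exact this hji'
    · push_neg at hex
      exact hex i hji'
  have hnxt_spec : ∀ j, nxt j ≤ m → b (nxt j) ≠ b j := by
    intro j hle
    by_cases hex : ∃ i, j < i ∧ b i ≠ b j
    · simp only [hnxtdef, dif_pos hex] at hle ⊢
      exact (Nat.find_spec hex).2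
    · simp only [hnxtdef, dif_neg hex] at hle; omega
  have hnxt_bound : ∀ j, nxt j ≤ m ∨ nxt j = m + 1 := by
    intro j
    by_cases hex : ∃ i, j < i ∧ b i ≠ b j
    · left
      simp only [hnxtdef, dif_pos hex]
      by_contra hgt
      push_neg at hgt
      have hiw := Nat.find_spec hex
      have hbm' : b (Nat.find hex) = b m := hbm _ (by omega)
      have hjm : j < m := by
        by_contra hjm
        push_neg at hjm
        have hbj : b j = b m := hbm j hjm
        exact hiw.2 (by rw [hbm', ← hbj])
      have hmin := Nat.find_min hex (show m < Nat.find hex by omega)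
      push_neg at hmin
      exact hiw.2 (by rw [hbm', hmin hjm])
    · right; simp only [hnxtdef, dif_neg hex]
  set r : ℕ → ℕ := fun k => nxt^[k] 0 with hrdef
  have hr0 : r 0 = 0 := rfl
  have hrs : ∀ k, r (k+1) = nxt (r k) := fun k => Function.iterate_succ_apply' nxt k 0
  have hex' : ∃ k, m < r (k+1) := by
    by_contra hco
    push_neg at hco
    have hmono : ∀ k, k ≤ r k := by
      intro k
      induction k with
      | zero => omega
      | succ k ih =>
        have h1 : r k ≤ m := by
          cases k with
          | zero => omega
          | succ k' => exact hco k'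
        have h2 := hnxt_gt (r k) h1
        rw [← hrs k] at h2
        omega
    have h3 := hmono (m+1)
    have h4 := hco m
    omega
  set m' := Nat.find hex' with hm'def
  have hrm'1 : m < r (m'+1) := Nat.find_spec hex'
  have hm'2 : ∀ k, k ≤ m' → r k ≤ m := by
    intro k hk
    cases k with
    | zero => omega
    | succ k' =>
      have h1 : ¬ (m < r (k'+1)) := Nat.find_min hex' (by omega)
      omega
  have hrtop : r (m'+1) = m + 1 := by
    rcases hnxt_bound (r m') with h1 | h1
    · rw [← hrs] at h1; omega
    · rw [← hrs] at h1; exact h1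
  have hrmono : ∀ k, k ≤ m' → r k < r (k+1) := by
    intro k hk
    have := hnxt_gt (r k) (hm'2 k hk)
    rwa [← hrs] at this
  have hrrun : ∀ k, k ≤ m' → ∀ i, r k ≤ i → i < r (k+1) → b i = b (r k) := by
    intro k hk i h1 h2
    rw [hrs] at h2
    exact hnxt_run (r k) i h1 h2
  have hrchange : ∀ k, k < m' → b (r (k+1)) ≠ b (r k) := by
    intro k hk
    rw [hrs]
    exact hnxt_spec (r k) (by rw [← hrs]; exact hm'2 (k+1) (by omega))
  set hW : ℕ → β := fun k => b (r k) with hWdef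
  -- basic index facts per k
  have hrpos : ∀ k, 0 < k → k ≤ m' → 1 ≤ r k := by
    intro k h0 hk
    have := hrmono (k-1) (by omega)
    rw [show k - 1 + 1 = k by omega] at this
    omega
  -- value of the left-boundary predecessor
  have hbleft : ∀ k, 0 < k → k ≤ m' → b (r k - 1) = hW (k-1) := by
    intro k h0 hk
    have h1 := hrmono (k-1) (by omega)
    rw [show k - 1 + 1 = k by omega] at h1
    exact hrrun (k-1) (by omega) (r k - 1) (by omega)
      (by rw [show k - 1 + 1 = k by omega]; omega)
  have hchainW : ∀ k, k < m' → EH (hW k) (hW (k+1)) ∨ EH (hW (k+1)) (hW k) := by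
    intro k hk
    have hC : r (k+1) ≤ m := hm'2 (k+1) (by omega)
    have hck : r k < r (k+1) := hrmono k (by omega)
    set c := r (k+1) - 1 with hcdef
    have hc1 : c + 1 = r (k+1) := by omega
    have hbc : b c = hW k := hrrun k (by omega) c (by omega) (by omega)
    have hbc1 : b (c+1) = hW (k+1) := by rw [hc1]
    have hcm : c < m := by omega
    have hne : f (g c) ≠ f (g (c+1)) := by
      rw [← hble c (by omega), ← hble (c+1) (by omega), hbc, hbc1]
      exact fun hh => hrchange k hk (by rw [← hc1, hbc1, hbc] at *; exact hh.symm)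
    rcases hedge c hcm hne with ⟨h1, _⟩ | ⟨h1, _⟩
    · left; rwa [← hble c (by omega), ← hble (c+1) (by omega), hbc, hbc1] at h1
    · right; rwa [← hble c (by omega), ← hble (c+1) (by omega), hbc, hbc1] at h1
  have hWne : ∀ k, k < m' → hW k ≠ hW (k+1) := by
    intro k hk heq
    exact hrchange k hk heq.symm
  have hL : ∀ k, 0 < k → k ≤ m' →
      (EH (hW (k-1)) (hW k) ∧ E' (g (r k - 1)) (g (r k))) ∨
      (EH (hW k) (hW (k-1)) ∧ E' (g (r k)) (g (r k - 1))) := by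
    intro k h0 hk
    have ha1 : 1 ≤ r k := hrpos k h0 hk
    have ham : r k ≤ m := hm'2 k hk
    have hbl : b (r k - 1) = hW (k-1) := hbleft k h0 hk
    have hwne : hW (k-1) ≠ hW k := by
      have := hWne (k-1) (by omega)
      rwa [show k - 1 + 1 = k by omega] at this
    have hne : f (g (r k - 1)) ≠ f (g (r k)) := by
      rw [← hble (r k - 1) (by omega), ← hble (r k) (by omega), hbl]
      exact hwne
    have he := hedge (r k - 1) (by omega) (by
      rwa [show r k - 1 + 1 = r k by omega])
    rw [show r k - 1 + 1 = r k by omega] at he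
    rcases he with ⟨h1, h2⟩ | ⟨h1, h2⟩
    · left
      rw [← hble (r k - 1) (by omega), ← hble (r k) (by omega), hbl] at h1
      exact ⟨h1, h2⟩
    · right
      rw [← hble (r k - 1) (by omega), ← hble (r k) (by omega), hbl] at h1
      exact ⟨h1, h2⟩
  have hR : ∀ k, k < m' →
      (EH (hW (k+1)) (hW k) ∧ E' (g (r (k+1))) (g (r (k+1) - 1))) ∨
      (EH (hW k) (hW (k+1)) ∧ E' (g (r (k+1) - 1)) (g (r (k+1)))) := by
    intro k hk
    have ha1 : 1 ≤ r (k+1) := hrpos (k+1) (by omega) (by omega)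
    have ham : r (k+1) ≤ m := hm'2 (k+1) (by omega)
    have hbl : b (r (k+1) - 1) = hW k := by
      have hck : r k < r (k+1) := hrmono k (by omega)
      exact hrrun k (by omega) (r (k+1) - 1) (by omega) (by omega)
    have hne : f (g (r (k+1) - 1)) ≠ f (g (r (k+1))) := by
      rw [← hble (r (k+1) - 1) (by omega), ← hble (r (k+1)) (by omega), hbl]
      exact hWne k hk
    have he := hedge (r (k+1) - 1) (by omega) (by
      rwa [show r (k+1) - 1 + 1 = r (k+1) by omega])
    rw [show r (k+1) - 1 + 1 = r (k+1) by omega] at he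
    rcases he with ⟨h1, h2⟩ | ⟨h1, h2⟩
    · right
      rw [← hble (r (k+1) - 1) (by omega), ← hble (r (k+1)) (by omega), hbl] at h1
      exact ⟨h1, h2⟩
    · left
      rw [← hble (r (k+1) - 1) (by omega), ← hble (r (k+1)) (by omega), hbl] at h1
      exact ⟨h1, h2⟩
  refine ⟨m', hW, ⟨hchainW, ?_⟩, ?_, ?_⟩
  · intro k hk
    constructor
    · rintro ⟨hk0, hkm, hLW, hRW⟩
      have ha1 : 1 ≤ r k := hrpos k hk0 hk
      have ham : r k ≤ m := hm'2 k hk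
      have hCm : r (k+1) ≤ m := hm'2 (k+1) (by omega)
      have hck : r k < r (k+1) := hrmono k (by omega)
      have hLa : E' (g (r k - 1)) (g (r k)) := by
        rcases hL k hk0 hk with ⟨_, h2⟩ | ⟨h1, _⟩
        · exact h2
        · exact (isDAG_asymm hH hLW h1).elim
      have hRc : E' (g (r (k+1))) (g (r (k+1) - 1)) := by
        rcases hR k (by omega) with ⟨_, h2⟩ | ⟨h1, _⟩
        · exact h2
        · exact (isDAG_asymm hH hRW h1).elim
      set a := r k with hadef
      set c := r (k+1) - 1 with hcdef
      have hc1 : c + 1 = r (k+1) := by omega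
      have hac : a ≤ c := by omega
      have hTex : ∃ t, a ≤ t ∧ t ≤ c ∧ E' (g (t+1)) (g t) :=
        ⟨c, hac, le_rfl, by rw [hc1]; exact hRc⟩
      set t₀ := Nat.find hTex with ht₀def
      obtain ⟨hat₀, ht₀c, hbk⟩ := Nat.find_spec hTex
      have hfwd : ∀ s, a ≤ s → s < t₀ → E' (g s) (g (s+1)) := by
        intro s h1 h2
        have h3 := Nat.find_min hTex h2
        push_neg at h3
        have h4 := h3 h1 (by omega)
        exact (hA.1 s (by omega)).resolve_right h4
      have hHt0 : HtHF E' g m t₀ := by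
        refine ⟨by omega, by omega, ?_, hbk⟩
        rcases eq_or_lt_of_le hat₀ with heq | hlt
        · have heq' : t₀ = a := by rw [ht₀def]; exact heq.symm
          rw [heq']
          exact hLa
        · have := hfwd (t₀ - 1) (by omega) (by omega)
          rwa [show t₀ - 1 + 1 = t₀ by omega] at this
      obtain ⟨d, hd, hr⟩ := (hA.2 t₀ (by omega)).1 hHt0
      refine ⟨f d, hd, ?_⟩
      have hpush := canonicalE_rtg_push htopo hH hsummary hr
      have hft₀ : f (g t₀) = hW k := by
        rw [← hble t₀ (by omega)]
        exact hrrun k (by omega) t₀ hat₀ (by omega)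
      rwa [hft₀] at hpush
    · intro hnH
      by_cases hk0 : k = 0
      · subst hk0
        have h1 : hW 0 = f (g 0) := by
          calc hW 0 = b (r 0) := rfl
          _ = b 0 := by rw [hr0]
          _ = f (g 0) := hble 0 (by omega)
        rw [h1]
        exact (hA.2 0 (by omega)).2 (fun ⟨c0, _⟩ => absurd c0 (by omega))
      by_cases hkm : k = m'
      · subst hkm
        have h1 : hW m' = f (g m) := by
          have h2 : b m = b (r m') := hrrun m' le_rfl m (hm'2 m' le_rfl) (by omega)
          calc hW m' = b (r m') := rfl
          _ = b m := h2.symm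
          _ = f (g m) := hble m le_rfl
        rw [h1]
        exact (hA.2 m le_rfl).2 (fun ⟨_, c0, _⟩ => absurd c0 (by omega))
      · have hk0' : 0 < k := by omega
        have hkm' : k < m' := by omega
        have ha1 : 1 ≤ r k := hrpos k hk0' hk
        have ham : r k ≤ m := hm'2 k hk
        have hCm : r (k+1) ≤ m := hm'2 (k+1) (by omega)
        have hck : r k < r (k+1) := hrmono k (by omega)
        by_cases hLW : EH (hW (k-1)) (hW k)
        · have hnRW : ¬ EH (hW (k+1)) (hW k) := fun hx =>
            hnH ⟨hk0', hkm', hLW, hx⟩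
          rcases hR k hkm' with ⟨h1, _⟩ | ⟨_, h2⟩
          · exact (hnRW h1).elim
          · have hnHt : ¬ HtHF E' g m (r (k+1) - 1) := by
              rintro ⟨_, _, _, h4⟩
              rw [show r (k+1) - 1 + 1 = r (k+1) by omega] at h4
              exact canonicalE_asymm htopo hH hsummary h2 h4
            have := (hA.2 (r (k+1) - 1) (by omega)).2 hnHt
            have hfc : f (g (r (k+1) - 1)) = hW k := by
              rw [← hble (r (k+1) - 1) (by omega)]
              exact hrrun k (by omega) (r (k+1) - 1) (by omega) (by omega)
            rwa [← hfc]
        · rcases hL k hk0' hk with ⟨h1, _⟩ | ⟨_, h2⟩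
          · exact (hLW h1).elim
          · have hnHt : ¬ HtHF E' g m (r k) := by
              rintro ⟨_, _, h3, _⟩
              exact canonicalE_asymm htopo hH hsummary h2 h3
            have h5 := (hA.2 (r k) (by omega)).2 hnHt
            have hfa : hW k = f (g (r k)) := hble (r k) (by omega)
            rw [hfa]
            exact h5
  · have h1 : hW 0 = f (g 0) := by
      calc hW 0 = b (r 0) := rfl
      _ = b 0 := by rw [hr0]
      _ = f (g 0) := hble 0 (by omega)
    rw [h1]; exact hX
  · have h1 : hW m' = f (g m) := by
      have h2 : b m = b (r m') := hrrun m' le_rfl m (hm'2 m' le_rfl) (by omega)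
      calc hW m' = b (r m') := rfl
      _ = b m := h2.symm
      _ = f (g m) := hble m le_rfl
    rw [h1]; exact hY

lemma connF_to_dconnected {α : Type*} {E : α → α → Prop} {X Y Z : Set α}
    (hE : IsDAG E) (h : ConnF E X Y Z) : DConnected E X Y Z := by
  obtain ⟨m, g, hA, hX, hY⟩ := h
  exact connF_dconnected hE m g hA hX hY

end Canonical

/-!
STATEMENT 12: Let `(H, f)` be a summary DAG of a DAG `G` with a fixed complete
topological order of `V(G)`, and let `G_H` be the associated canonical causal DAG.
Then for any pairwise disjoint subsets `X, Y, Z` of `V(H)`: `X` and `Y` are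
d-separated by `Z` in `H` iff `f⁻¹(X)` and `f⁻¹(Y)` are d-separated by `f⁻¹(Z)`
in `G_H`.
-/

theorem dsep_summary_iff_dsep_canonical {n : ℕ} {β : Type*} [Fintype β]
    (E : Fin n → Fin n → Prop) (htopo : ∀ i j, E i j → i < j)
    (EH : β → β → Prop) (hH : IsDAG EH)
    (f : Fin n → β) (hf : Function.Surjective f)
    (hsummary : ∀ i j, E i j → f i = f j ∨ EH (f i) (f j)) :
    ∀ X Y Z : Set β, Disjoint X Y → Disjoint X Z → Disjoint Y Z →
      (DSeparated EH X Y Z ↔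
        DSeparated (canonicalE E EH f) (f ⁻¹' X) (f ⁻¹' Y) (f ⁻¹' Z)) := by

  intro X Y Z _ _ _
  have hmain : DConnected EH X Y Z ↔
      DConnected (canonicalE E EH f) (f ⁻¹' X) (f ⁻¹' Y) (f ⁻¹' Z) := by
    constructor
    · intro h
      exact connF_to_dconnected (canonicalE_isDAG htopo hH hsummary)
        (lift_connF htopo hH hsummary hf (dconnected_connF h))
    · intro h
      exact connF_to_dconnected hH
        (contract_connF htopo hH hsummary (dconnected_connF h))
  unfold DSeparated
  exact not_congr hmain

end CausalDAGSummary
end
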